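/- arXiv:math/0407474 — 3 statements merged into one kernel-verified Lean document; each statement's English description precedes it below -/
import Mathlib

section
/- Let Ω ⊆ ℝⁿ be open and let u : Ω → ℝ be a C³ solution of the minimal surface equation div(∇u/√(1+|∇u|²)) = 0 on Ω. Set v = √(1+|∇u|²), ν = ∇u/v and g^{ij} = δ^{ij} − ν^i ν^j. Then at every point of Ω, Σ_{i,j} g^{ij} v_{ij} ≥ (2/v)·Σ_{i,j} g^{ij} v_i v_j, where v_i and v_{ij} denote the first and second partial derivatives of the function v. -/
open scoped BigOperators

/-- The partial derivative `∂f/∂xᵢ` of a function on Euclidean space. -/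
noncomputable def pd {n : ℕ} (i : Fin n) (f : EuclideanSpace ℝ (Fin n) → ℝ)
    (x : EuclideanSpace ℝ (Fin n)) : ℝ :=
  fderiv ℝ f x (EuclideanSpace.single i 1)

/-- `v = √(1 + |∇u|²)`. -/
noncomputable def vGrad {n : ℕ} (u : EuclideanSpace ℝ (Fin n) → ℝ)
    (x : EuclideanSpace ℝ (Fin n)) : ℝ :=
  Real.sqrt (1 + ∑ i, (pd i u x) ^ 2)

/-- `νⁱ = uᵢ / v`. -/
noncomputable def nuVec {n : ℕ} (u : EuclideanSpace ℝ (Fin n) → ℝ) (i : Fin n)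
    (x : EuclideanSpace ℝ (Fin n)) : ℝ :=
  pd i u x / vGrad u x

/-- `gⁱʲ = δⁱʲ − νⁱ νʲ`. -/
noncomputable def gIJ {n : ℕ} (u : EuclideanSpace ℝ (Fin n) → ℝ) (i j : Fin n)
    (x : EuclideanSpace ℝ (Fin n)) : ℝ :=
  (if i = j then (1 : ℝ) else 0) - nuVec u i x * nuVec u j x

/-- `u` solves the minimal surface equation `div(∇u/√(1+|∇u|²)) = 0` on `Ω`. -/
def SolvesMSE {n : ℕ} (u : EuclideanSpace ℝ (Fin n) → ℝ)
    (Ω : Set (EuclideanSpace ℝ (Fin n))) : Prop :=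
  ∀ x ∈ Ω, ∑ i, pd i (fun y => pd i u y / vGrad u y) x = 0

section Helpers
variable {n : ℕ} {f g : EuclideanSpace ℝ (Fin n) → ℝ} {x : EuclideanSpace ℝ (Fin n)} {i j : Fin n}

lemma pd_congr (h : f =ᶠ[nhds x] g) : pd i f x = pd i g x := by
  simp [pd, h.fderiv_eq]

lemma pd_add (hf : DifferentiableAt ℝ f x) (hg : DifferentiableAt ℝ g x) :
    pd i (fun y => f y + g y) x = pd i f x + pd i g x := by
  simp [pd, fderiv_fun_add hf hg]

lemma pd_sub (hf : DifferentiableAt ℝ f x) (hg : DifferentiableAt ℝ g x) :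
    pd i (fun y => f y - g y) x = pd i f x - pd i g x := by
  simp [pd, fderiv_fun_sub hf hg]

lemma pd_mul (hf : DifferentiableAt ℝ f x) (hg : DifferentiableAt ℝ g x) :
    pd i (fun y => f y * g y) x = f x * pd i g x + pd i f x * g x := by
  simp [pd, fderiv_fun_mul hf hg, mul_comm]

lemma pd_sum {ι : Type*} (s : Finset ι) (F : ι → EuclideanSpace ℝ (Fin n) → ℝ)
    (h : ∀ k ∈ s, DifferentiableAt ℝ (F k) x) :
    pd i (fun y => ∑ k ∈ s, F k y) x = ∑ k ∈ s, pd i (F k) x := by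
  simp [pd, fderiv_fun_sum h]

lemma pd_comp {h : ℝ → ℝ} {d : ℝ} (hh : HasDerivAt h d (f x)) (hf : DifferentiableAt ℝ f x) :
    pd i (fun y => h (f y)) x = d * pd i f x := by
  have H := hh.comp_hasFDerivAt x hf.hasFDerivAt
  have : pd i (fun y => h (f y)) x = fderiv ℝ (h ∘ f) x (EuclideanSpace.single i 1) := rfl
  rw [this, H.fderiv]; simp [pd]

lemma pd_inv (hf : DifferentiableAt ℝ f x) (h0 : f x ≠ 0) :
    pd i (fun y => (f y)⁻¹) x = -(f x ^ 2)⁻¹ * pd i f x :=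
  pd_comp (hasDerivAt_inv h0) hf

lemma pd_div (hf : DifferentiableAt ℝ f x) (hg : DifferentiableAt ℝ g x) (h0 : g x ≠ 0) :
    pd i (fun y => f y / g y) x = (pd i f x * g x - f x * pd i g x) / g x ^ 2 := by
  have : (fun y => f y / g y) = fun y => f y * (g y)⁻¹ := by
    funext y; rw [div_eq_mul_inv]
  rw [this, pd_mul (g := fun y => (g y)⁻¹) hf (hg.inv h0), pd_inv hg h0]
  field_simp
  ring

lemma pd_sqrt (hf : DifferentiableAt ℝ f x) (h0 : 0 < f x) :
    pd i (fun y => Real.sqrt (f y)) x = pd i f x / (2 * Real.sqrt (f x)) := by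
  rw [pd_comp (Real.hasDerivAt_sqrt h0.ne') hf]
  ring

lemma contDiffAt_pd {m : WithTop ℕ∞} (hf : ContDiffAt ℝ (m + 1) f x) :
    ContDiffAt ℝ m (pd i f) x := by
  have h := hf.fderiv_right (le_refl (m + 1))
  exact h.clm_apply contDiffAt_const

lemma pd_pd (hdf : DifferentiableAt ℝ (fderiv ℝ f) x) :
    pd i (pd j f) x = fderiv ℝ (fderiv ℝ f) x (EuclideanSpace.single i 1) (EuclideanSpace.single j 1) := by
  have : pd j f = fun y => (fderiv ℝ f y) (EuclideanSpace.single j 1) := rfl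
  rw [pd, this, fderiv_clm_apply hdf (differentiableAt_const _)]
  simp

lemma pd_comm (hf : ContDiffAt ℝ 2 f x) : pd i (pd j f) x = pd j (pd i f) x := by
  have hsym := hf.isSymmSndFDerivAt (by simp)
  have hdf : DifferentiableAt ℝ (fderiv ℝ f) x := by
    have := hf.fderiv_right (m := 1) (by norm_num)
    exact this.differentiableAt (by norm_num)
  rw [pd_pd hdf, pd_pd hdf]
  exact hsym _ _

end Helpers

section Calc
variable {n : ℕ} {u : EuclideanSpace ℝ (Fin n) → ℝ} {y : EuclideanSpace ℝ (Fin n)}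

lemma one_le_vGrad : 1 ≤ vGrad u y := by
  rw [show (1:ℝ) = Real.sqrt 1 from Real.sqrt_one.symm, vGrad]
  exact Real.sqrt_le_sqrt (le_add_of_nonneg_right (Finset.sum_nonneg fun i _ => sq_nonneg _))

lemma vGrad_pos : 0 < vGrad u y := lt_of_lt_of_le one_pos one_le_vGrad

lemma sq_vGrad : vGrad u y ^ 2 = 1 + ∑ i, (pd i u y) ^ 2 :=
  Real.sq_sqrt (by positivity)

variable (hy : ContDiffAt ℝ 3 u y)
include hy

lemma cd_pd1 (k : Fin n) : ContDiffAt ℝ 2 (pd k u) y :=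
  contDiffAt_pd (by exact_mod_cast hy)

lemma cd_pd2 (j k : Fin n) : ContDiffAt ℝ 1 (pd j (pd k u)) y :=
  contDiffAt_pd (by exact_mod_cast cd_pd1 hy k)

lemma cd_vGrad : ContDiffAt ℝ 2 (vGrad u) y := by
  have hF : ContDiffAt ℝ 2 (fun z => 1 + ∑ k, (pd k u z) ^ 2) y := by
    apply ContDiffAt.add contDiffAt_const
    exact ContDiffAt.sum fun k _ => (cd_pd1 hy k).pow 2
  have h0 : (1 + ∑ k, (pd k u y) ^ 2) ≠ 0 := by positivity
  exact (Real.contDiffAt_sqrt h0).comp y hF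

lemma diff_pd_vGrad (j : Fin n) : DifferentiableAt ℝ (pd j (vGrad u)) y :=
  (contDiffAt_pd (m := 1) (by exact_mod_cast cd_vGrad hy)).differentiableAt (by norm_num)

lemma diff_nuVec (i : Fin n) : DifferentiableAt ℝ (nuVec u i) y := by
  have h1 : DifferentiableAt ℝ (pd i u) y := (cd_pd1 hy i).differentiableAt (by norm_num)
  have h2 : DifferentiableAt ℝ (vGrad u) y := (cd_vGrad hy).differentiableAt (by norm_num)
  have : nuVec u i = fun z => pd i u z / vGrad u z := rfl
  rw [this]
  exact ((((cd_pd1 hy i).of_le one_le_two).div ((cd_vGrad hy).of_le one_le_two)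
    vGrad_pos.ne').differentiableAt (by norm_num))

lemma pd_vGrad_eq (j : Fin n) :
    pd j (vGrad u) y = (∑ k, pd k u y * pd j (pd k u) y) / vGrad u y := by
  have hdp : ∀ k : Fin n, DifferentiableAt ℝ (pd k u) y := fun k =>
    (cd_pd1 hy k).differentiableAt (by norm_num)
  have hF : DifferentiableAt ℝ (fun z => ∑ k, (pd k u z) ^ 2) y :=
    DifferentiableAt.fun_sum fun k _ => ((hdp k).pow 2)
  have h1 : vGrad u = fun z => Real.sqrt ((fun z => 1 + ∑ k, (pd k u z) ^ 2) z) := rfl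
  rw [h1, pd_sqrt (f := fun z => 1 + ∑ k, (pd k u z) ^ 2) (differentiableAt_const (1:ℝ) |>.add hF) (by positivity)]
  rw [pd_add (differentiableAt_const _) hF, pd_sum Finset.univ (fun k z => (pd k u z) ^ 2) (fun k _ => (hdp k).pow 2)]
  have hsq : ∀ k : Fin n, pd j (fun z => (pd k u z) ^ 2) y = 2 * pd k u y * pd j (pd k u) y := by
    intro k
    have := pd_comp (i := j) (hasDerivAt_pow 2 (pd k u y)) (hdp k)
    simpa [mul_assoc] using this
  rw [Finset.sum_congr rfl fun k _ => hsq k]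
  have hv : vGrad u y = Real.sqrt (1 + ∑ k, (pd k u y) ^ 2) := rfl
  rw [pd, fderiv_fun_const]  -- pd j (const 1) = 0
  simp only [Pi.zero_apply, ContinuousLinearMap.zero_apply, zero_add]
  rw [← hv]
  have h2 : ∑ k : Fin n, 2 * pd k u y * pd j (pd k u) y
      = 2 * ∑ k : Fin n, pd k u y * pd j (pd k u) y := by
    rw [Finset.mul_sum]; exact Finset.sum_congr rfl fun k _ => by ring
  rw [h2]
  have hvne : vGrad u y ≠ 0 := vGrad_pos.ne'
  field_simp
end Calc



lemma factor_sum {n : ℕ} (f g : Fin n → ℝ) :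
    (∑ i, ∑ j, f i * g j) = (∑ i, f i) * (∑ j, g j) :=
  (Finset.sum_mul_sum _ _ _ _).symm

lemma delta_sum {n : ℕ} (f : Fin n → Fin n → ℝ) :
    (∑ i, ∑ j, (if i = j then (1:ℝ) else 0) * f i j) = ∑ i, f i i := by
  refine Finset.sum_congr rfl fun i _ => ?_
  have h : ∀ j, (if i = j then (1:ℝ) else 0) * f i j = if i = j then f i j else 0 := by
    intro j; by_cases hij : i = j <;> simp [hij]
  rw [Finset.sum_congr rfl fun j _ => h j, Finset.sum_ite_eq]
  simp

set_option maxHeartbeats 1000000 in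
lemma key_algebra {n : ℕ} (v : ℝ) (a ν V : Fin n → ℝ) (A VV : Fin n → Fin n → ℝ)
    (T : Fin n → Fin n → Fin n → ℝ)
    (hvpos : 0 < v)
    (hv2 : v ^ 2 = 1 + ∑ i, a i ^ 2)
    (hν : ∀ i, ν i = a i / v)
    (hA : ∀ i j, A i j = A j i)
    (hT1 : ∀ i j k, T i j k = T j i k)
    (hT2 : ∀ i j k, T i j k = T i k j)
    (hV : ∀ j, V j = (∑ k, a k * A j k) / v)
    (hVV : ∀ i j, VV i j =
      ((∑ k, (a k * T i j k + A i k * A j k)) * v - (∑ k, a k * A j k) * V i) / v ^ 2)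
    (hI : ∀ k, ∑ i, T k i i
      = ∑ i, (ν i * VV k i + (A k i * v - a i * V k) / v ^ 2 * V i)) :
    (2 / v) * ∑ i, ∑ j, (((if i = j then (1:ℝ) else 0) - ν i * ν j) * V i * V j)
      ≤ ∑ i, ∑ j, (((if i = j then (1:ℝ) else 0) - ν i * ν j) * VV i j) := by
  have hvne : v ≠ 0 := hvpos.ne'
  have ha : ∀ i, a i = ν i * v := by intro i; rw [hν]; field_simp
  obtain ⟨t, ht⟩ : ∃ t : ℝ, t = ∑ i, ν i ^ 2 := ⟨_, rfl⟩
  obtain ⟨s, hs⟩ : ∃ s : ℝ, s = ∑ i, ν i * V i := ⟨_, rfl⟩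
  obtain ⟨q2, hq2⟩ : ∃ q2 : ℝ, q2 = ∑ i, V i ^ 2 := ⟨_, rfl⟩
  obtain ⟨A2, hA2⟩ : ∃ A2 : ℝ, A2 = ∑ i, ∑ j, A i j ^ 2 := ⟨_, rfl⟩
  obtain ⟨S, hS⟩ : ∃ S : Fin n → Fin n → ℝ, S = fun i j => ∑ k, a k * T i j k := ⟨_, rfl⟩
  obtain ⟨C, hC⟩ : ∃ C : Fin n → Fin n → ℝ, C = fun i j => ∑ k, A i k * A j k := ⟨_, rfl⟩
  have hq2' : (∑ i, V i * V i) = q2 := by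
    rw [hq2]; exact Finset.sum_congr rfl fun i _ => (pow_two (V i)).symm
  -- V as matrix-vector product
  have hVν : ∀ j, V j = ∑ k, ν k * A j k := by
    intro j
    rw [hV j, Finset.sum_div]
    refine Finset.sum_congr rfl fun k _ => ?_
    rw [hν]; ring
  have hVν' : ∀ j, (∑ k, ν k * A k j) = V j := by
    intro j
    rw [hVν j]
    exact Finset.sum_congr rfl fun k _ => by rw [hA k j]
  -- VV in clean form
  have hVVm : ∀ i j, VV i j * v = S i j + C i j - V i * V j := by
    intro i j
    have hsplit : (∑ k, (a k * T i j k + A i k * A j k)) = S i j + C i j := by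
      simp only [hS, hC]
      exact Finset.sum_add_distrib
    have hva : (∑ k, a k * A j k) = V j * v := by rw [hV j]; field_simp
    rw [hVV i j, hsplit, hva]
    field_simp
  -- matrix moments
  have M2 : (∑ i, ∑ j, A i j * (ν i * V j)) = q2 :=
    calc (∑ i, ∑ j, A i j * (ν i * V j))
        = ∑ j, ∑ i, A i j * (ν i * V j) := Finset.sum_comm
      _ = ∑ j, V j * V j := Finset.sum_congr rfl fun j _ =>
          calc (∑ i, A i j * (ν i * V j)) = (∑ i, ν i * A i j) * V j := by
                rw [Finset.sum_mul]; exact Finset.sum_congr rfl fun i _ => by ring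
            _ = V j * V j := by rw [hVν' j]
      _ = q2 := hq2'
  have M3 : (∑ i, ∑ j, A i j * (V i * ν j)) = q2 :=
    calc (∑ i, ∑ j, A i j * (V i * ν j))
        = ∑ i, V i * V i := Finset.sum_congr rfl fun i _ =>
          calc (∑ j, A i j * (V i * ν j)) = (∑ j, ν j * A i j) * V i := by
                rw [Finset.sum_mul]; exact Finset.sum_congr rfl fun j _ => by ring
            _ = V i * V i := by rw [← hVν i]
      _ = q2 := hq2'
  have M4 : (∑ i, ∑ j, A i j * (ν i * ν j)) = s :=
    calc (∑ i, ∑ j, A i j * (ν i * ν j))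
        = ∑ i, ν i * V i := Finset.sum_congr rfl fun i _ =>
          calc (∑ j, A i j * (ν i * ν j)) = ν i * ∑ j, ν j * A i j := by
                rw [Finset.mul_sum]; exact Finset.sum_congr rfl fun j _ => by ring
            _ = ν i * V i := by rw [← hVν i]
      _ = s := hs.symm
  have MC : (∑ i, ∑ j, (ν i * ν j) * C i j) = q2 := by
    have inner : ∀ i, (∑ j, (ν i * ν j) * C i j) = ∑ m, (ν i * A i m) * V m := by
      intro i
      calc (∑ j, (ν i * ν j) * C i j)
          = ∑ j, ∑ m, (ν i * A i m) * (ν j * A j m) := Finset.sum_congr rfl fun j _ => by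
            simp only [hC, Finset.mul_sum]; exact Finset.sum_congr rfl fun m _ => by ring
        _ = ∑ m, ∑ j, (ν i * A i m) * (ν j * A j m) := Finset.sum_comm
        _ = ∑ m, (ν i * A i m) * V m := Finset.sum_congr rfl fun m _ => by
            rw [← Finset.mul_sum, hVν' m]
    calc (∑ i, ∑ j, (ν i * ν j) * C i j)
        = ∑ i, ∑ m, (ν i * A i m) * V m := Finset.sum_congr rfl fun i _ => inner i
      _ = ∑ m, ∑ i, (ν i * A i m) * V m := Finset.sum_comm
      _ = ∑ m, V m * V m := Finset.sum_congr rfl fun m _ => by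
          rw [← Finset.sum_mul, hVν' m]
      _ = q2 := hq2'
  -- trace of C
  have MtrC : (∑ i, C i i) = A2 := by
    rw [hA2]
    simp only [hC]
    exact Finset.sum_congr rfl fun i _ => Finset.sum_congr rfl fun k _ => (pow_two (A i k)).symm
  -- the contracted differentiated MSE
  have hI' : ∀ k, v * (∑ i, T k i i)
      = ∑ i, (ν i * S k i + ν i * C k i + A k i * V i - 2 * (ν i * V i) * V k) := by
    intro k
    rw [hI k, Finset.mul_sum]
    refine Finset.sum_congr rfl fun i _ => ?_
    have e1 := hVVm k i
    rw [ha i]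
    field_simp
    linear_combination (ν i) * e1

  -- contract the differentiated MSE with ν
  have hL : (∑ k, ν k * (v * ∑ i, T k i i)) = ∑ i, S i i :=
    calc (∑ k, ν k * (v * ∑ i, T k i i))
        = ∑ k, ∑ i, a k * T i i k := Finset.sum_congr rfl fun k _ => by
          rw [Finset.mul_sum, Finset.mul_sum]
          refine Finset.sum_congr rfl fun i _ => ?_
          rw [ha k, hT1 k i i, hT2 i k i]; ring
      _ = ∑ i, ∑ k, a k * T i i k := Finset.sum_comm
      _ = ∑ i, S i i := Finset.sum_congr rfl fun i _ => by simp only [hS]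
  have h2s : (∑ k, ∑ i, 2 * ((ν k * V k) * (ν i * V i))) = 2 * (s * s) := by
    simp only [← Finset.mul_sum, ← Finset.sum_mul, ← hs]
  have hR : (∑ k, ν k * (v * ∑ i, T k i i))
      = (∑ k, ∑ i, (ν k * ν i) * S k i) + q2 + q2 - 2 * (s * s) :=
    calc (∑ k, ν k * (v * ∑ i, T k i i))
        = ∑ k, ∑ i, ((ν k * ν i) * S k i + (ν k * ν i) * C k i + A k i * (ν k * V i)
            - 2 * ((ν k * V k) * (ν i * V i))) := Finset.sum_congr rfl fun k _ => by
          rw [hI' k, Finset.mul_sum]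
          exact Finset.sum_congr rfl fun i _ => by ring
      _ = (∑ k, ∑ i, (ν k * ν i) * S k i) + (∑ k, ∑ i, (ν k * ν i) * C k i)
            + (∑ k, ∑ i, A k i * (ν k * V i))
            - (∑ k, ∑ i, 2 * ((ν k * V k) * (ν i * V i))) := by
          simp only [Finset.sum_add_distrib, Finset.sum_sub_distrib]
      _ = (∑ k, ∑ i, (ν k * ν i) * S k i) + q2 + q2 - 2 * (s * s) := by
          rw [MC, M2, h2s]
  have hKey : (∑ i, S i i) - (∑ i, ∑ j, (ν i * ν j) * S i j) = 2 * q2 - 2 * s ^ 2 := by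
    have h := hL.symm.trans hR
    linear_combination h
  -- value of the left-hand side
  have hLHSval : (∑ i, ∑ j, (((if i = j then (1:ℝ) else 0) - ν i * ν j) * V i * V j))
      = q2 - s ^ 2 :=
    calc (∑ i, ∑ j, (((if i = j then (1:ℝ) else 0) - ν i * ν j) * V i * V j))
        = ∑ i, ∑ j, ((if i = j then (1:ℝ) else 0) * (V i * V j)
            - (ν i * V i) * (ν j * V j)) := Finset.sum_congr rfl fun i _ =>
          Finset.sum_congr rfl fun j _ => by ring
      _ = (∑ i, ∑ j, (if i = j then (1:ℝ) else 0) * (V i * V j))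
            - (∑ i, ∑ j, (ν i * V i) * (ν j * V j)) := by
          simp only [Finset.sum_sub_distrib]
      _ = (∑ i, V i * V i) - (∑ i, ν i * V i) * (∑ j, ν j * V j) := by
          rw [delta_sum, factor_sum]
      _ = q2 - s ^ 2 := by rw [hq2', ← hs]; ring
  -- value of the right-hand side
  have hRHSval : (∑ i, ∑ j, (((if i = j then (1:ℝ) else 0) - ν i * ν j) * VV i j)) * v
      = A2 - s ^ 2 :=
    calc (∑ i, ∑ j, (((if i = j then (1:ℝ) else 0) - ν i * ν j) * VV i j)) * v
        = ∑ i, ∑ j, (((if i = j then (1:ℝ) else 0) - ν i * ν j) * VV i j) * v := by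
          rw [Finset.sum_mul]
          exact Finset.sum_congr rfl fun i _ => Finset.sum_mul _ _ _
      _ = ∑ i, ∑ j, (((if i = j then (1:ℝ) else 0) * S i j
            + (if i = j then (1:ℝ) else 0) * C i j + (ν i * V i) * (ν j * V j))
            - ((if i = j then (1:ℝ) else 0) * (V i * V j)
            + (ν i * ν j) * S i j + (ν i * ν j) * C i j)) := Finset.sum_congr rfl fun i _ =>
          Finset.sum_congr rfl fun j _ => by
            linear_combination ((if i = j then (1:ℝ) else 0) - ν i * ν j) * hVVm i j
      _ = ((∑ i, ∑ j, (if i = j then (1:ℝ) else 0) * S i j)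
            + (∑ i, ∑ j, (if i = j then (1:ℝ) else 0) * C i j)
            + (∑ i, ∑ j, (ν i * V i) * (ν j * V j)))
            - ((∑ i, ∑ j, (if i = j then (1:ℝ) else 0) * (V i * V j))
            + (∑ i, ∑ j, (ν i * ν j) * S i j)
            + (∑ i, ∑ j, (ν i * ν j) * C i j)) := by
          simp only [Finset.sum_add_distrib, Finset.sum_sub_distrib]
      _ = ((∑ i, S i i) + A2 + (∑ i, ν i * V i) * (∑ j, ν j * V j))
            - ((∑ i, V i * V i) + (∑ i, ∑ j, (ν i * ν j) * S i j) + q2) := by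
          rw [delta_sum, delta_sum, delta_sum, factor_sum, MtrC, MC]
      _ = A2 - s ^ 2 := by rw [hq2', ← hs]; linear_combination hKey
  -- nonnegativity facts
  have htnn : (0:ℝ) ≤ t := ht ▸ Finset.sum_nonneg fun i _ => sq_nonneg _
  have hq2nn : (0:ℝ) ≤ q2 := hq2 ▸ Finset.sum_nonneg fun i _ => sq_nonneg _
  have hA2nn : (0:ℝ) ≤ A2 :=
    hA2 ▸ Finset.sum_nonneg fun i _ => Finset.sum_nonneg fun j _ => sq_nonneg _
  have ht1 : t ≤ 1 := by
    have h1 : (∑ i, a i ^ 2) = t * v ^ 2 := by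
      rw [ht, Finset.sum_mul]
      exact Finset.sum_congr rfl fun i _ => by rw [ha i]; ring
    nlinarith [hv2, h1, mul_pos hvpos hvpos]
  have hCS : q2 ≤ t * A2 := by
    have per : ∀ j, V j ^ 2 ≤ t * ∑ k, A j k ^ 2 := by
      intro j
      rw [hVν j, ht]
      exact Finset.sum_mul_sq_le_sq_mul_sq Finset.univ ν (fun k => A j k)
    calc q2 = ∑ j, V j ^ 2 := hq2
      _ ≤ ∑ j, t * ∑ k, A j k ^ 2 := Finset.sum_le_sum fun j _ => per j
      _ = t * A2 := by rw [hA2, Finset.mul_sum]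
  -- the Cauchy–Schwarz-type matrix inequality
  have hB : 0 ≤ t ^ 2 * A2 - 2 * t * q2 + s ^ 2 := by
    rcases eq_or_ne t 0 with h0 | h0
    · rw [h0]
      nlinarith [sq_nonneg s]
    · have P1 : (∑ i, ∑ j, t ^ 4 * A i j ^ 2) = t ^ 4 * A2 := by
        simp only [← Finset.mul_sum, ← hA2]
      have P2 : (∑ i, ∑ j, 2 * t ^ 3 * (A i j * (ν i * V j))) = 2 * t ^ 3 * q2 := by
        simp only [← Finset.mul_sum, M2]
      have P3 : (∑ i, ∑ j, 2 * t ^ 3 * (A i j * (V i * ν j))) = 2 * t ^ 3 * q2 := by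
        simp only [← Finset.mul_sum, M3]
      have P4 : (∑ i, ∑ j, 2 * (t ^ 2 * s) * (A i j * (ν i * ν j))) = 2 * (t ^ 2 * s) * s := by
        simp only [← Finset.mul_sum, M4]
      have P5 : (∑ i, ∑ j, t ^ 2 * (ν i ^ 2 * V j ^ 2)) = t ^ 2 * (t * q2) := by
        simp only [← Finset.mul_sum, ← Finset.sum_mul, ← ht, ← hq2]
      have P6 : (∑ i, ∑ j, t ^ 2 * (V i ^ 2 * ν j ^ 2)) = t ^ 2 * (q2 * t) := by
        simp only [← Finset.mul_sum, ← Finset.sum_mul, ← ht, ← hq2]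
      have P7 : (∑ i, ∑ j, s ^ 2 * (ν i ^ 2 * ν j ^ 2)) = s ^ 2 * (t * t) := by
        simp only [← Finset.mul_sum, ← Finset.sum_mul, ← ht]
      have P8 : (∑ i, ∑ j, 2 * t ^ 2 * ((ν i * V i) * (ν j * V j)))
          = 2 * t ^ 2 * (s * s) := by
        simp only [← Finset.mul_sum, ← Finset.sum_mul, ← hs]
      have P9 : (∑ i, ∑ j, 2 * (t * s) * (ν i ^ 2 * (ν j * V j)))
          = 2 * (t * s) * (t * s) := by
        simp only [← Finset.mul_sum, ← Finset.sum_mul, ← ht, ← hs]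
      have P10 : (∑ i, ∑ j, 2 * (t * s) * ((ν i * V i) * ν j ^ 2))
          = 2 * (t * s) * (s * t) := by
        simp only [← Finset.mul_sum, ← Finset.sum_mul, ← ht, ← hs]
      have hBid : (∑ i, ∑ j,
            (t ^ 2 * A i j - t * (ν i * V j) - t * (V i * ν j) + s * (ν i * ν j)) ^ 2)
          = t ^ 2 * (t ^ 2 * A2 - 2 * t * q2 + s ^ 2) :=
        calc (∑ i, ∑ j,
              (t ^ 2 * A i j - t * (ν i * V j) - t * (V i * ν j) + s * (ν i * ν j)) ^ 2)
            = ∑ i, ∑ j, (t ^ 4 * A i j ^ 2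
                - 2 * t ^ 3 * (A i j * (ν i * V j))
                - 2 * t ^ 3 * (A i j * (V i * ν j))
                + 2 * (t ^ 2 * s) * (A i j * (ν i * ν j))
                + t ^ 2 * (ν i ^ 2 * V j ^ 2)
                + t ^ 2 * (V i ^ 2 * ν j ^ 2)
                + s ^ 2 * (ν i ^ 2 * ν j ^ 2)
                + 2 * t ^ 2 * ((ν i * V i) * (ν j * V j))
                - 2 * (t * s) * (ν i ^ 2 * (ν j * V j))
                - 2 * (t * s) * ((ν i * V i) * ν j ^ 2)) := Finset.sum_congr rfl fun i _ =>
              Finset.sum_congr rfl fun j _ => by ring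
          _ = (∑ i, ∑ j, t ^ 4 * A i j ^ 2)
                - (∑ i, ∑ j, 2 * t ^ 3 * (A i j * (ν i * V j)))
                - (∑ i, ∑ j, 2 * t ^ 3 * (A i j * (V i * ν j)))
                + (∑ i, ∑ j, 2 * (t ^ 2 * s) * (A i j * (ν i * ν j)))
                + (∑ i, ∑ j, t ^ 2 * (ν i ^ 2 * V j ^ 2))
                + (∑ i, ∑ j, t ^ 2 * (V i ^ 2 * ν j ^ 2))
                + (∑ i, ∑ j, s ^ 2 * (ν i ^ 2 * ν j ^ 2))
                + (∑ i, ∑ j, 2 * t ^ 2 * ((ν i * V i) * (ν j * V j)))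
                - (∑ i, ∑ j, 2 * (t * s) * (ν i ^ 2 * (ν j * V j)))
                - (∑ i, ∑ j, 2 * (t * s) * ((ν i * V i) * ν j ^ 2)) := by
              simp only [Finset.sum_add_distrib, Finset.sum_sub_distrib]
          _ = t ^ 4 * A2 - 2 * t ^ 3 * q2 - 2 * t ^ 3 * q2 + 2 * (t ^ 2 * s) * s
                + t ^ 2 * (t * q2) + t ^ 2 * (q2 * t) + s ^ 2 * (t * t)
                + 2 * t ^ 2 * (s * s) - 2 * (t * s) * (t * s) - 2 * (t * s) * (s * t) := by
              rw [P1, P2, P3, P4, P5, P6, P7, P8, P9, P10]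
          _ = t ^ 2 * (t ^ 2 * A2 - 2 * t * q2 + s ^ 2) := by ring
      have hnn : 0 ≤ (∑ i, ∑ j,
          (t ^ 2 * A i j - t * (ν i * V j) - t * (V i * ν j) + s * (ν i * ν j)) ^ 2) :=
        Finset.sum_nonneg fun i _ => Finset.sum_nonneg fun j _ => sq_nonneg _
      rw [hBid] at hnn
      have ht2 : 0 < t ^ 2 := by positivity
      nlinarith [hnn, ht2]
  -- the final inequality
  have final : 2 * q2 ≤ A2 + s ^ 2 := by
    have hid : A2 + s ^ 2 - 2 * q2 = (t ^ 2 * A2 - 2 * t * q2 + s ^ 2)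
        + 2 * ((1 - t) * (t * A2 - q2)) + (1 - t) ^ 2 * A2 := by ring
    have h1 : 0 ≤ (1 - t) * (t * A2 - q2) :=
      mul_nonneg (by linarith) (by linarith)
    have h2 : 0 ≤ (1 - t) ^ 2 * A2 := mul_nonneg (sq_nonneg _) hA2nn
    linarith [hB, h1, h2, hid]
  have hRHSdiv : (∑ i, ∑ j, (((if i = j then (1:ℝ) else 0) - ν i * ν j) * VV i j))
      = (A2 - s ^ 2) / v := by
    rw [eq_div_iff hvne]
    exact hRHSval
  rw [hLHSval, hRHSdiv, div_mul_eq_mul_div, div_le_div_iff₀ hvpos hvpos]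
  nlinarith [final, hvpos, mul_nonneg (by linarith [final] : (0:ℝ) ≤ A2 - s ^ 2 - 2 * (q2 - s ^ 2)) hvpos.le]


lemma pd_nuVec_eq {n : ℕ} {u : EuclideanSpace ℝ (Fin n) → ℝ} {y : EuclideanSpace ℝ (Fin n)}
    (hy : ContDiffAt ℝ 3 u y) (k i : Fin n) :
    pd k (nuVec u i) y
      = (pd k (pd i u) y * vGrad u y - pd i u y * pd k (vGrad u) y) / vGrad u y ^ 2 := by
  have h1 : DifferentiableAt ℝ (pd i u) y := (cd_pd1 hy i).differentiableAt (by norm_num)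
  have h2 : DifferentiableAt ℝ (vGrad u) y := (cd_vGrad hy).differentiableAt (by norm_num)
  have : nuVec u i = fun z => pd i u z / vGrad u z := rfl
  rw [this, pd_div h1 h2 vGrad_pos.ne']


/-- The Euclidean (Ricci-flat) case of the paper's key subsolution inequality (8):
for a `C³` solution of the minimal surface equation on an open set `Ω ⊆ ℝⁿ`,
`Σ gⁱʲ vᵢⱼ ≥ (2/v) Σ gⁱʲ vᵢ vⱼ` at every point of `Ω`. -/
theorem subsolution_inequality_for_v (n : ℕ) (Ω : Set (EuclideanSpace ℝ (Fin n)))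
    (hΩ : IsOpen Ω) (u : EuclideanSpace ℝ (Fin n) → ℝ) (hu : ContDiffOn ℝ 3 u Ω)
    (hmse : SolvesMSE u Ω) :
    ∀ x ∈ Ω,
      (2 / vGrad u x) * ∑ i, ∑ j, gIJ u i j x * pd i (vGrad u) x * pd j (vGrad u) x
        ≤ ∑ i, ∑ j, gIJ u i j x * pd i (pd j (vGrad u)) x := by
  intro x hx
  have hy3 : ∀ y ∈ Ω, ContDiffAt ℝ 3 u y := fun y hy => hu.contDiffAt (hΩ.mem_nhds hy)
  have hx3 : ContDiffAt ℝ 3 u x := hy3 x hx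
  have hnx : Ω ∈ nhds x := hΩ.mem_nhds hx
  -- scalar values at x
  set v : ℝ := vGrad u x with hvdef
  have hvpos : 0 < v := vGrad_pos
  have hv2 : v ^ 2 = 1 + ∑ i, (pd i u x) ^ 2 := sq_vGrad
  -- symmetry of second derivatives
  have hA : ∀ i j : Fin n, pd i (pd j u) x = pd j (pd i u) x := fun i j =>
    pd_comm (hx3.of_le (by norm_num))
  -- symmetry of third derivatives
  have hT1 : ∀ i j k : Fin n, pd i (pd j (pd k u)) x = pd j (pd i (pd k u)) x := fun i j k =>
    pd_comm (cd_pd1 hx3 k)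
  have hT2 : ∀ i j k : Fin n, pd i (pd j (pd k u)) x = pd i (pd k (pd j u)) x := by
    intro i j k
    apply pd_congr
    filter_upwards [hnx] with y hy
    exact pd_comm ((hy3 y hy).of_le (by norm_num))
  -- first derivative of v
  have hV : ∀ j : Fin n, pd j (vGrad u) x = (∑ k, pd k u x * pd j (pd k u) x) / v :=
    fun j => pd_vGrad_eq hx3 j
  -- second derivative of v
  have hVV : ∀ i j : Fin n, pd i (pd j (vGrad u)) x =
      ((∑ k, (pd k u x * pd i (pd j (pd k u)) x + pd i (pd k u) x * pd j (pd k u) x)) * v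
        - (∑ k, pd k u x * pd j (pd k u) x) * pd i (vGrad u) x) / v ^ 2 := by
    intro i j
    have hev : pd j (vGrad u) =ᶠ[nhds x]
        fun y => (∑ k, pd k u y * pd j (pd k u) y) / vGrad u y := by
      filter_upwards [hnx] with y hy
      exact pd_vGrad_eq (hy3 y hy) j
    have hdN : DifferentiableAt ℝ (fun y => ∑ k, pd k u y * pd j (pd k u) y) x := by
      apply DifferentiableAt.fun_sum
      intro k _
      exact ((cd_pd1 hx3 k).differentiableAt (by norm_num)).mul
        ((cd_pd2 hx3 j k).differentiableAt (by norm_num))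
    have hdv : DifferentiableAt ℝ (vGrad u) x := (cd_vGrad hx3).differentiableAt (by norm_num)
    have hN : pd i (fun y => ∑ k, pd k u y * pd j (pd k u) y) x
        = ∑ k, (pd k u x * pd i (pd j (pd k u)) x + pd i (pd k u) x * pd j (pd k u) x) := by
      rw [pd_sum Finset.univ (fun k z => pd k u z * pd j (pd k u) z) (fun k _ => ((cd_pd1 hx3 k).differentiableAt (by norm_num)).mul
        ((cd_pd2 hx3 j k).differentiableAt (by norm_num)))]
      refine Finset.sum_congr rfl fun k _ => ?_
      rw [pd_mul ((cd_pd1 hx3 k).differentiableAt (by norm_num))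
        ((cd_pd2 hx3 j k).differentiableAt (by norm_num))]
    rw [pd_congr hev, pd_div hdN hdv vGrad_pos.ne', hN]
  -- the minimal surface equation, nondivergence form, on Ω
  have hW0 : ∀ y ∈ Ω, (∑ i, pd i (pd i u) y)
      = ∑ i, nuVec u i y * pd i (vGrad u) y := by
    intro y hy
    have h3 := hy3 y hy
    have hm := hmse y hy
    have hrw : ∀ i : Fin n, pd i (fun z => pd i u z / vGrad u z) y
        = (pd i (pd i u) y * vGrad u y - pd i u y * pd i (vGrad u) y) / vGrad u y ^ 2 :=
      fun i => pd_nuVec_eq h3 i i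
    rw [Finset.sum_congr rfl fun i _ => hrw i, ← Finset.sum_div,
      div_eq_zero_iff] at hm
    have hm2 : ∑ i, (pd i (pd i u) y * vGrad u y - pd i u y * pd i (vGrad u) y) = 0 := by
      rcases hm with h | h
      · exact h
      · exact absurd h (pow_ne_zero 2 vGrad_pos.ne')
    rw [Finset.sum_sub_distrib, sub_eq_zero, ← Finset.sum_mul] at hm2
    have hvne : vGrad u y ≠ 0 := vGrad_pos.ne'
    rw [Finset.sum_congr rfl (fun i _ => show nuVec u i y * pd i (vGrad u) y
      = pd i u y * pd i (vGrad u) y / vGrad u y by rw [nuVec]; ring),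
      ← Finset.sum_div]
    field_simp
    linarith [hm2]
  -- differentiate the MSE
  have hI : ∀ k : Fin n, ∑ i, pd k (pd i (pd i u)) x
      = ∑ i, (nuVec u i x * pd k (pd i (vGrad u)) x
          + (pd k (pd i u) x * v - pd i u x * pd k (vGrad u) x) / v ^ 2 * pd i (vGrad u) x) := by
    intro k
    have hdiffs : ∀ i : Fin n, DifferentiableAt ℝ (fun y => nuVec u i y * pd i (vGrad u) y) x :=
      fun i => (diff_nuVec hx3 i).mul (diff_pd_vGrad hx3 i)
    have hdiff2 : ∀ i : Fin n, DifferentiableAt ℝ (pd i (pd i u)) x :=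
      fun i => (cd_pd2 hx3 i i).differentiableAt (by norm_num)
    have hev : (fun y => ∑ i, pd i (pd i u) y) =ᶠ[nhds x]
        (fun y => ∑ i, nuVec u i y * pd i (vGrad u) y) := by
      filter_upwards [hnx] with y hy
      exact hW0 y hy
    have h1 : pd k (fun y => ∑ i, pd i (pd i u) y) x
        = pd k (fun y => ∑ i, nuVec u i y * pd i (vGrad u) y) x := pd_congr hev
    rw [pd_sum Finset.univ _ (fun i _ => hdiff2 i)] at h1
    rw [pd_sum Finset.univ _ (fun i _ => hdiffs i)] at h1
    rw [h1]
    refine Finset.sum_congr rfl fun i _ => ?_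
    rw [pd_mul (diff_nuVec hx3 i) (diff_pd_vGrad hx3 i)]
    rw [pd_nuVec_eq hx3 k i]
  -- apply the algebraic lemma
  simp only [gIJ]
  exact key_algebra v (fun i => pd i u x) (fun i => nuVec u i x) (fun i => pd i (vGrad u) x)
    (fun i j => pd i (pd j u) x) (fun i j => pd i (pd j (vGrad u)) x)
    (fun i j k => pd i (pd j (pd k u)) x)
    hvpos hv2 (fun i => rfl) hA hT1 hT2 hV hVV hI
end

section
/- Let r > 0 and let C₊ be a constant with 0 ≤ C₊ < π²/(8r²). Let 0 < ρ ≤ r and let h : [0, ρ] → ℝ be a C² function with h(0) = 0, h(ρ) = 1, h ≥ 0, and h''(t) + 2C₊·h(t) ≥ 0 for all t ∈ [0, ρ]. Then for every t ∈ [0, ρ], h(t) ≤ cos(√(2C₊)·t)/cos(√(2C₊)·ρ) ≤ 1/cos(√(2C₊)·r). (Note that √(2C₊)·r < π/2, so cos(√(2C₊)·t) > 0 for all t ∈ [0, r].) -/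
/-- The quantitative ODE comparison of the paper's Step 4: if `0 ≤ Cplus < π²/(8r²)`,
`0 < ρ ≤ r`, and `h` is a nonnegative `C²` function on `[0, ρ]` with `h(0) = 0`,
`h(ρ) = 1` and `h'' + 2Cplus h ≥ 0`, then
`h(t) ≤ cos(√(2Cplus) t)/cos(√(2Cplus) ρ) ≤ 1/cos(√(2Cplus) r)` for every `t ∈ [0, ρ]`. -/
theorem jacobi_field_norm_bound (r Cplus ρ : ℝ) (hr : 0 < r) (hC0 : 0 ≤ Cplus)
    (hC : Cplus < Real.pi ^ 2 / (8 * r ^ 2)) (hρ0 : 0 < ρ) (hρr : ρ ≤ r)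
    (h : ℝ → ℝ) (hh : ContDiffOn ℝ 2 h (Set.Icc 0 ρ))
    (h0 : h 0 = 0) (h1 : h ρ = 1)
    (hpos : ∀ t ∈ Set.Icc (0 : ℝ) ρ, 0 ≤ h t)
    (hsub : ∀ t ∈ Set.Icc (0 : ℝ) ρ,
      0 ≤ iteratedDerivWithin 2 h (Set.Icc 0 ρ) t + 2 * Cplus * h t) :
    ∀ t ∈ Set.Icc (0 : ℝ) ρ,
      h t ≤ Real.cos (Real.sqrt (2 * Cplus) * t) / Real.cos (Real.sqrt (2 * Cplus) * ρ) ∧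
      Real.cos (Real.sqrt (2 * Cplus) * t) / Real.cos (Real.sqrt (2 * Cplus) * ρ)
        ≤ 1 / Real.cos (Real.sqrt (2 * Cplus) * r) := by
  set ω : ℝ := Real.sqrt (2 * Cplus) with hωdef
  have hω0 : 0 ≤ ω := Real.sqrt_nonneg _
  have hω2 : ω ^ 2 = 2 * Cplus := Real.sq_sqrt (by positivity)
  have hπ : 0 < Real.pi := Real.pi_pos
  -- ω * r < π / 2
  have hωr : ω * r < Real.pi / 2 := by
    have h1' : ω < Real.pi / (2 * r) := by
      have hC' : Cplus * (8 * r ^ 2) < Real.pi ^ 2 := (lt_div_iff₀ (by positivity)).mp hC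
      have hsq : ω ^ 2 < (Real.pi / (2 * r)) ^ 2 := by
        rw [hω2, div_pow, lt_div_iff₀ (by positivity)]
        nlinarith
      nlinarith [sq_nonneg (ω - Real.pi / (2 * r)), sq_nonneg (ω + Real.pi / (2 * r)),
        div_pos hπ (by positivity : (0:ℝ) < 2 * r)]
    calc ω * r < Real.pi / (2 * r) * r := by
          exact mul_lt_mul_of_pos_right h1' hr
      _ = Real.pi / 2 := by field_simp
  have hcos_pos : ∀ t ∈ Set.Icc (0 : ℝ) r, 0 < Real.cos (ω * t) := by
    intro t ht
    apply Real.cos_pos_of_mem_Ioo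
    constructor
    · have : 0 ≤ ω * t := mul_nonneg hω0 ht.1
      linarith [div_pos hπ (by norm_num : (0:ℝ) < 2)]
    · calc ω * t ≤ ω * r := mul_le_mul_of_nonneg_left ht.2 hω0
        _ < Real.pi / 2 := hωr
  have hcρ : 0 < Real.cos (ω * ρ) := hcos_pos ρ ⟨hρ0.le, hρr⟩
  have hcr : 0 < Real.cos (ω * r) := hcos_pos r ⟨hr.le, le_refl r⟩
  -- Second inequality, for all t ∈ [0, ρ]
  have hsecond : ∀ t ∈ Set.Icc (0:ℝ) ρ,
      Real.cos (ω * t) / Real.cos (ω * ρ) ≤ 1 / Real.cos (ω * r) := by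
    intro t ht
    have hcρr : Real.cos (ω * r) ≤ Real.cos (ω * ρ) := by
      apply Real.cos_le_cos_of_nonneg_of_le_pi (mul_nonneg hω0 hρ0.le)
      · linarith
      · exact mul_le_mul_of_nonneg_left hρr hω0
    exact div_le_div₀ (by norm_num) (Real.cos_le_one _) hcr hcρr
  -- Main comparison: h t * cos(ωρ) ≤ cos(ωt) on [0, ρ]
  set s : Set ℝ := Set.Icc (0:ℝ) ρ with hsdef
  have hsu : UniqueDiffOn ℝ s := uniqueDiffOn_Icc hρ0
  set H1 : ℝ → ℝ := derivWithin h s with hH1def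
  set H2 : ℝ → ℝ := derivWithin H1 s with hH2def
  have hhd : DifferentiableOn ℝ h s := hh.differentiableOn (by norm_num)
  have hH1c : ContDiffOn ℝ 1 H1 s := hh.derivWithin hsu (by norm_num)
  have hH1d : DifferentiableOn ℝ H1 s := hH1c.differentiableOn (by norm_num)
  have hiter : ∀ t ∈ s, iteratedDerivWithin 2 h s t = H2 t := by
    intro t ht
    rw [iteratedDerivWithin_succ]
    exact derivWithin_congr
      (fun x hx => congrFun iteratedDerivWithin_one x)
      (congrFun iteratedDerivWithin_one t)
  set cρ : ℝ := Real.cos (ω * ρ) with hcρdef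
  set f : ℝ → ℝ := fun t => h t * cρ - Real.cos (ω * t) with hfdef
  set F1 : ℝ → ℝ := fun t => H1 t * cρ + ω * Real.sin (ω * t) with hF1def
  set W : ℝ → ℝ := fun t => F1 t * Real.cos (ω * t) + f t * (ω * Real.sin (ω * t))
    with hWdef
  -- derivative facts for cos(ω t), sin(ω t)
  have hlin : ∀ t : ℝ, HasDerivAt (fun u : ℝ => ω * u) ω t := fun t => by
    simpa using (hasDerivAt_id t).const_mul ω
  have hcosD : ∀ t : ℝ, HasDerivAt (fun u => Real.cos (ω * u)) (-(ω * Real.sin (ω * t))) t := by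
    intro t
    have h2 := (Real.hasDerivAt_cos (ω * t)).comp t (hlin t)
    simp only [Function.comp_def] at h2
    exact h2.congr_deriv (by ring)
  have hsinD : ∀ t : ℝ, HasDerivAt (fun u => Real.sin (ω * u)) (ω * Real.cos (ω * t)) t := by
    intro t
    have h2 := (Real.hasDerivAt_sin (ω * t)).comp t (hlin t)
    simp only [Function.comp_def] at h2
    exact h2.congr_deriv (by ring)
  -- f has derivative F1 within s
  have hfD : ∀ t ∈ s, HasDerivWithinAt f (F1 t) s t := by
    intro t ht
    have h1' : HasDerivWithinAt h (H1 t) s t := (hhd t ht).hasDerivWithinAt.congr_deriv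
      (by rw [hH1def])
    have := (h1'.mul_const cρ).sub ((hcosD t).hasDerivWithinAt)
    exact this.congr_deriv (by rw [hF1def]; ring)
  -- F1 has derivative H2 t * cρ + ω^2 * cos(ω t) within s
  have hF1D : ∀ t ∈ s, HasDerivWithinAt F1 (H2 t * cρ + ω ^ 2 * Real.cos (ω * t)) s t := by
    intro t ht
    have h2' : HasDerivWithinAt H1 (H2 t) s t := (hH1d t ht).hasDerivWithinAt.congr_deriv
      (by rw [hH2def])
    have := (h2'.mul_const cρ).add (((hsinD t).hasDerivWithinAt).const_mul ω)
    exact this.congr_deriv (by ring)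
  -- W has nonnegative derivative within s
  have hWD : ∀ t ∈ s, HasDerivWithinAt W
      (Real.cos (ω * t) * (cρ * (H2 t + ω ^ 2 * h t))) s t := by
    intro t ht
    have hW' := ((hF1D t ht).mul ((hcosD t).hasDerivWithinAt)).add
      ((hfD t ht).mul (((hsinD t).hasDerivWithinAt).const_mul ω))
    refine hW'.congr_deriv ?_
    simp only [hfdef]
    ring
  have hWderiv_nonneg : ∀ t ∈ s, 0 ≤ Real.cos (ω * t) * (cρ * (H2 t + ω ^ 2 * h t)) := by
    intro t ht
    have hc : 0 < Real.cos (ω * t) := hcos_pos t ⟨ht.1, ht.2.trans hρr⟩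
    have hsub' := hsub t ht
    rw [hiter t ht] at hsub'
    have : 0 ≤ H2 t + ω ^ 2 * h t := by rw [hω2]; linarith
    positivity
  -- continuity of W on s
  have hcosC : Continuous fun u => Real.cos (ω * u) :=
    Real.continuous_cos.comp (continuous_const.mul continuous_id)
  have hsinC : Continuous fun u => Real.sin (ω * u) :=
    Real.continuous_sin.comp (continuous_const.mul continuous_id)
  have hfC : ContinuousOn f s := by
    apply ContinuousOn.sub (hhd.continuousOn.mul continuousOn_const) hcosC.continuousOn
  have hWC : ContinuousOn W s := by
    apply ContinuousOn.add
    · exact ((hH1d.continuousOn.mul continuousOn_const).add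
        (continuousOn_const.mul hsinC.continuousOn)).mul hcosC.continuousOn
    · exact hfC.mul (continuousOn_const.mul hsinC.continuousOn)
  -- W is monotone on s
  have hWmono : MonotoneOn W s := by
    apply monotoneOn_of_deriv_nonneg (convex_Icc 0 ρ) hWC
    · intro x hx
      rw [interior_Icc] at hx
      exact ((hWD x ⟨hx.1.le, hx.2.le⟩).hasDerivAt
        (Icc_mem_nhds hx.1 hx.2)).differentiableAt.differentiableWithinAt
    · intro x hx
      rw [interior_Icc] at hx
      have hx' : x ∈ s := ⟨hx.1.le, hx.2.le⟩
      rw [((hWD x hx').hasDerivAt (Icc_mem_nhds hx.1 hx.2)).deriv]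
      exact hWderiv_nonneg x hx'
  -- φ := f / cos(ω ·)
  set φ : ℝ → ℝ := fun t => f t / Real.cos (ω * t) with hφdef
  have hφC : ContinuousOn φ s := by
    apply hfC.div hcosC.continuousOn
    intro x hx
    exact (hcos_pos x ⟨hx.1, hx.2.trans hρr⟩).ne'
  have hφD : ∀ x ∈ Set.Ioo (0:ℝ) ρ, HasDerivAt φ (W x / Real.cos (ω * x) ^ 2) x := by
    intro x hx
    have hfx : HasDerivAt f (F1 x) x :=
      (hfD x ⟨hx.1.le, hx.2.le⟩).hasDerivAt (Icc_mem_nhds hx.1 hx.2)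
    have hc : Real.cos (ω * x) ≠ 0 := (hcos_pos x ⟨hx.1.le, hx.2.le.trans hρr⟩).ne'
    have := hfx.div (hcosD x) hc
    refine this.congr_deriv ?_
    rw [hWdef]
    field_simp
    try ring
  have hφ0 : φ 0 = -1 := by
    simp [hφdef, hfdef, h0]
  have hφρ : φ ρ = 0 := by
    simp [hφdef, hfdef, h1, hcρdef]
  -- key claim: f ≤ 0 on s
  have hfle : ∀ t ∈ s, f t ≤ 0 := by
    by_contra hcon
    push_neg at hcon
    obtain ⟨t₀, ht₀s, ht₀⟩ := hcon
    have hct₀ : 0 < Real.cos (ω * t₀) := hcos_pos t₀ ⟨ht₀s.1, ht₀s.2.trans hρr⟩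
    have hφt₀ : 0 < φ t₀ := div_pos ht₀ hct₀
    have ht₀0 : 0 < t₀ := by
      rcases ht₀s.1.lt_or_eq with h' | h'
      · exact h'
      · exfalso; rw [← h'] at hφt₀; rw [hφ0] at hφt₀; linarith
    have ht₀ρ : t₀ < ρ := by
      rcases ht₀s.2.lt_or_eq with h' | h'
      · exact h'
      · exfalso; rw [h'] at hφt₀; rw [hφρ] at hφt₀; linarith
    -- MVT on [0, t₀]
    obtain ⟨a, ha, haD⟩ := exists_hasDerivAt_eq_slope φ (fun x => W x / Real.cos (ω * x) ^ 2)
      ht₀0 (hφC.mono (Set.Icc_subset_Icc le_rfl ht₀s.2))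
      (fun x hx => hφD x ⟨hx.1, hx.2.trans ht₀ρ⟩)
    -- MVT on [t₀, ρ]
    obtain ⟨b, hb, hbD⟩ := exists_hasDerivAt_eq_slope φ (fun x => W x / Real.cos (ω * x) ^ 2)
      ht₀ρ (hφC.mono (Set.Icc_subset_Icc ht₀s.1 le_rfl))
      (fun x hx => hφD x ⟨ht₀0.trans hx.1, hx.2⟩)
    have haD' : W a / Real.cos (ω * a) ^ 2 = (φ t₀ - φ 0) / (t₀ - 0) := haD
    have hbD' : W b / Real.cos (ω * b) ^ 2 = (φ ρ - φ t₀) / (ρ - t₀) := hbD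
    have haW : 0 < W a := by
      have hca : 0 < Real.cos (ω * a) ^ 2 := by
        have := hcos_pos a ⟨ha.1.le, (ha.2.trans ht₀ρ).le.trans hρr⟩
        positivity
      have h' : 0 < W a / Real.cos (ω * a) ^ 2 := by
        rw [haD', hφ0]; apply div_pos <;> linarith
      calc 0 < W a / Real.cos (ω * a) ^ 2 * Real.cos (ω * a) ^ 2 := mul_pos h' hca
        _ = W a := div_mul_cancel₀ _ hca.ne'
    have hbW : W b < 0 := by
      have hcb : 0 < Real.cos (ω * b) ^ 2 := by
        have := hcos_pos b ⟨(ht₀0.trans hb.1).le, hb.2.le.trans hρr⟩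
        positivity
      have h' : W b / Real.cos (ω * b) ^ 2 < 0 := by
        rw [hbD', hφρ]; apply div_neg_of_neg_of_pos <;> linarith
      calc W b = W b / Real.cos (ω * b) ^ 2 * Real.cos (ω * b) ^ 2 :=
            (div_mul_cancel₀ _ hcb.ne').symm
        _ < 0 := mul_neg_of_neg_of_pos h' hcb
    have hab : a ≤ b := by linarith [ha.2, hb.1]
    have has : a ∈ s := ⟨ha.1.le, (ha.2.trans ht₀ρ).le⟩
    have hbs : b ∈ s := ⟨(ht₀0.trans hb.1).le, hb.2.le⟩
    linarith [hWmono has hbs hab]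
  -- conclude
  intro t ht
  refine ⟨?_, hsecond t ht⟩
  have := hfle t ht
  rw [hfdef] at this
  rw [le_div_iff₀ hcρ]
  simpa using this
end

section
/- Let Ω ⊆ ℝⁿ be open and let u : Ω → ℝ be a C² function satisfying Σ_{i,j} g^{ij} u_{ij} = 0 on Ω, where v = √(1+|∇u|²), ν = ∇u/v, g^{ij} = δ^{ij} − ν^iν^j. Let u₀ > 0, let χ : Ω → ℝ be of class C², let f : ℝ → ℝ be of class C² with f' ≥ 0 and f'' ≥ 0, and define η(x) := f( u(x)/(2u₀) + χ(x) ). Then at every point of Ω, writing ψ = u/(2u₀) + χ: Σ_{i,j} g^{ij} ∂_i∂_j η ≥ f''(ψ)·( |∇u|² + 4u₀·(∇u·∇χ) )/( 4u₀²·(1+|∇u|²) ) + f'(ψ)·Σ_{i,j} g^{ij} ∂_i∂_j χ. -/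
open scoped BigOperators

section Helpers

variable {n : ℕ}

lemma clm_apply_eq (L : ℝ →L[ℝ] ℝ) (t : ℝ) : L t = t * L 1 := by
  rw [← smul_eq_mul, ← L.map_smul, smul_eq_mul, mul_one]

lemma pd_congr_s12 {F G : EuclideanSpace ℝ (Fin n) → ℝ} {s : Set (EuclideanSpace ℝ (Fin n))}
    (hs : IsOpen s) {x : EuclideanSpace ℝ (Fin n)} (hx : x ∈ s)
    (h : ∀ y ∈ s, F y = G y) (i : Fin n) : pd i F x = pd i G x := by
  unfold pd
  rw [Filter.EventuallyEq.fderiv_eq (Filter.eventuallyEq_of_mem (hs.mem_nhds hx) h)]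

lemma pd_comp_s12 (g : ℝ → ℝ) (F : EuclideanSpace ℝ (Fin n) → ℝ) (x : EuclideanSpace ℝ (Fin n))
    (hg : DifferentiableAt ℝ g (F x)) (hF : DifferentiableAt ℝ F x) (i : Fin n) :
    pd i (fun y => g (F y)) x = deriv g (F x) * pd i F x := by
  unfold pd
  rw [show (fun y => g (F y)) = g ∘ F from rfl, fderiv_comp x hg hF]
  simp only [ContinuousLinearMap.comp_apply]
  rw [clm_apply_eq]
  rw [← fderiv_apply_one_eq_deriv]
  ring

lemma pd_mul_s12 (F G : EuclideanSpace ℝ (Fin n) → ℝ) (x : EuclideanSpace ℝ (Fin n))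
    (hF : DifferentiableAt ℝ F x) (hG : DifferentiableAt ℝ G x) (i : Fin n) :
    pd i (fun y => F y * G y) x = pd i F x * G x + F x * pd i G x := by
  unfold pd
  rw [fderiv_fun_mul hF hG]
  simp only [ContinuousLinearMap.add_apply, ContinuousLinearMap.coe_smul', Pi.smul_apply,
    smul_eq_mul]
  ring

lemma pd_div_add (F G : EuclideanSpace ℝ (Fin n) → ℝ) (c : ℝ) (x : EuclideanSpace ℝ (Fin n))
    (hF : DifferentiableAt ℝ F x) (hG : DifferentiableAt ℝ G x) (i : Fin n) :
    pd i (fun y => F y / c + G y) x = pd i F x / c + pd i G x := by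
  unfold pd
  rw [show (fun y => F y / c + G y) = (fun y => F y * c⁻¹ + G y) by
    funext y; rw [div_eq_mul_inv]]
  rw [fderiv_fun_add (hF.mul_const c⁻¹) hG, ContinuousLinearMap.add_apply,
    fderiv_mul_const hF c⁻¹]
  simp only [ContinuousLinearMap.coe_smul', Pi.smul_apply, smul_eq_mul, div_eq_mul_inv]
  ring

lemma contDiffOn_pd {F : EuclideanSpace ℝ (Fin n) → ℝ} {s : Set (EuclideanSpace ℝ (Fin n))}
    (hs : IsOpen s) (hF : ContDiffOn ℝ 2 F s) (j : Fin n) :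
    ContDiffOn ℝ 1 (pd j F) s := by
  have h1 : ContDiffOn ℝ 1 (fderiv ℝ F) s := hF.fderiv_of_isOpen hs (by norm_num)
  exact (ContinuousLinearMap.apply ℝ ℝ (EuclideanSpace.single j 1)).contDiff.comp_contDiffOn h1

lemma pd_diffAt {F : EuclideanSpace ℝ (Fin n) → ℝ} {s : Set (EuclideanSpace ℝ (Fin n))}
    (hs : IsOpen s) (hF : ContDiffOn ℝ 2 F s) (j : Fin n) {x : EuclideanSpace ℝ (Fin n)}
    (hx : x ∈ s) : DifferentiableAt ℝ (pd j F) x :=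
  ((contDiffOn_pd hs hF j).differentiableOn one_ne_zero).differentiableAt (hs.mem_nhds hx)

end Helpers

/-- The Euclidean version of the paper's inequality (9) (Step 2): for a `C²` solution
`u` of `Σ gⁱʲ uᵢⱼ = 0`, a `C²` function `χ`, and a `C²` convex nondecreasing `f`, the
function `η = f(u/(2u₀) + χ)` satisfies
`Σ gⁱʲ ηᵢⱼ ≥ f''(ψ)(|∇u|² + 4u₀ ∇u·∇χ)/(4u₀²(1+|∇u|²)) + f'(ψ) Σ gⁱʲ χᵢⱼ`. -/
theorem eta_subsolution_inequality (n : ℕ) (Ω : Set (EuclideanSpace ℝ (Fin n)))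
    (hΩ : IsOpen Ω) (u : EuclideanSpace ℝ (Fin n) → ℝ) (hu : ContDiffOn ℝ 2 u Ω)
    (hmse : ∀ x ∈ Ω, ∑ i, ∑ j, gIJ u i j x * pd i (pd j u) x = 0)
    (u₀ : ℝ) (hu₀ : 0 < u₀)
    (χ : EuclideanSpace ℝ (Fin n) → ℝ) (hχ : ContDiffOn ℝ 2 χ Ω)
    (f : ℝ → ℝ) (hf : ContDiff ℝ 2 f)
    (hf' : ∀ s, 0 ≤ deriv f s) (hf'' : ∀ s, 0 ≤ deriv (deriv f) s) :
    ∀ x ∈ Ω,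
      deriv (deriv f) (u x / (2 * u₀) + χ x) *
          ((∑ i, (pd i u x) ^ 2) + 4 * u₀ * ∑ i, pd i u x * pd i χ x) /
          (4 * u₀ ^ 2 * (1 + ∑ i, (pd i u x) ^ 2))
        + deriv f (u x / (2 * u₀) + χ x) * ∑ i, ∑ j, gIJ u i j x * pd i (pd j χ) x
      ≤ ∑ i, ∑ j, gIJ u i j x * pd i (pd j (fun y => f (u y / (2 * u₀) + χ y))) x := by
  intro x hx
  -- differentiability facts
  have hud : ∀ y ∈ Ω, DifferentiableAt ℝ u y := fun y hy =>
    ((hu.differentiableOn two_ne_zero) y hy).differentiableAt (hΩ.mem_nhds hy)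
  have hχd : ∀ y ∈ Ω, DifferentiableAt ℝ χ y := fun y hy =>
    ((hχ.differentiableOn two_ne_zero) y hy).differentiableAt (hΩ.mem_nhds hy)
  have hψC2 : ContDiffOn ℝ 2 (fun y => u y / (2 * u₀) + χ y) Ω := (hu.div_const _).add hχ
  have hψd : ∀ y ∈ Ω, DifferentiableAt ℝ (fun z => u z / (2 * u₀) + χ z) y := by
    intro y hy
    have h1 : DifferentiableAt ℝ (fun z => u z / (2 * u₀)) y := by
      simp only [div_eq_mul_inv]
      exact (hud y hy).mul_const (2 * u₀)⁻¹
    exact h1.add (hχd y hy)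
  have hfdiff : Differentiable ℝ f := hf.differentiable two_ne_zero
  have hf'C1 : ContDiff ℝ 1 (deriv f) := by
    have h2 : ContDiff ℝ (1 + 1 : ℕ) f := by exact_mod_cast hf
    exact (contDiff_succ_iff_deriv.mp h2).2.2
  have hf'diff : Differentiable ℝ (deriv f) := hf'C1.differentiable one_ne_zero
  -- first derivatives of ψ on Ω
  have hP : ∀ j, ∀ y ∈ Ω, pd j (fun z => u z / (2 * u₀) + χ z) y
      = pd j u y / (2 * u₀) + pd j χ y := fun j y hy =>
    pd_div_add u χ (2 * u₀) y (hud y hy) (hχd y hy) j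
  -- second derivatives of ψ at x
  have hψ2 : ∀ i j : Fin n, pd i (pd j (fun z => u z / (2 * u₀) + χ z)) x
      = pd i (pd j u) x / (2 * u₀) + pd i (pd j χ) x := by
    intro i j
    have e1 : pd i (pd j (fun z => u z / (2 * u₀) + χ z)) x
        = pd i (fun y => pd j u y / (2 * u₀) + pd j χ y) x :=
      pd_congr_s12 hΩ hx (hP j) i
    rw [e1]
    exact pd_div_add (pd j u) (pd j χ) (2 * u₀) x (pd_diffAt hΩ hu j hx)
      (pd_diffAt hΩ hχ j hx) i
  -- first derivative of η on Ω
  have hη1 : ∀ j : Fin n, ∀ y ∈ Ω, pd j (fun z => f (u z / (2 * u₀) + χ z)) y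
      = deriv f (u y / (2 * u₀) + χ y) * pd j (fun z => u z / (2 * u₀) + χ z) y :=
    fun j y hy => pd_comp_s12 f (fun z => u z / (2 * u₀) + χ z) y (hfdiff _) (hψd y hy) j
  -- second derivative of η at x
  have hη2 : ∀ i j : Fin n, pd i (pd j (fun z => f (u z / (2 * u₀) + χ z))) x
      = deriv (deriv f) (u x / (2 * u₀) + χ x)
          * (pd i u x / (2 * u₀) + pd i χ x) * (pd j u x / (2 * u₀) + pd j χ x)
        + deriv f (u x / (2 * u₀) + χ x)
          * (pd i (pd j u) x / (2 * u₀) + pd i (pd j χ) x) := by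
    intro i j
    have e1 : pd i (pd j (fun z => f (u z / (2 * u₀) + χ z))) x
        = pd i (fun y => deriv f (u y / (2 * u₀) + χ y)
            * pd j (fun z => u z / (2 * u₀) + χ z) y) x :=
      pd_congr_s12 hΩ hx (hη1 j) i
    have e2 : pd i (fun y => deriv f (u y / (2 * u₀) + χ y)
            * pd j (fun z => u z / (2 * u₀) + χ z) y) x
        = pd i (fun y => deriv f (u y / (2 * u₀) + χ y)) x
            * pd j (fun z => u z / (2 * u₀) + χ z) x
          + deriv f (u x / (2 * u₀) + χ x)
            * pd i (pd j (fun z => u z / (2 * u₀) + χ z)) x :=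
      pd_mul_s12 _ _ x
        (DifferentiableAt.comp x (hf'diff _) (hψd x hx))
        (pd_diffAt hΩ hψC2 j hx) i
    have e3 : pd i (fun y => deriv f (u y / (2 * u₀) + χ y)) x
        = deriv (deriv f) (u x / (2 * u₀) + χ x)
            * pd i (fun z => u z / (2 * u₀) + χ z) x :=
      pd_comp_s12 (deriv f) (fun z => u z / (2 * u₀) + χ z) x (hf'diff _) (hψd x hx) i
    rw [e1, e2, e3, hψ2 i j, hP i x hx, hP j x hx]
  -- rewrite the double sum
  have hsum : ∑ i, ∑ j, gIJ u i j x * pd i (pd j (fun y => f (u y / (2 * u₀) + χ y))) x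
      = deriv (deriv f) (u x / (2 * u₀) + χ x)
          * (∑ i, ∑ j, gIJ u i j x
              * ((pd i u x / (2 * u₀) + pd i χ x) * (pd j u x / (2 * u₀) + pd j χ x)))
        + deriv f (u x / (2 * u₀) + χ x) / (2 * u₀)
          * (∑ i, ∑ j, gIJ u i j x * pd i (pd j u) x)
        + deriv f (u x / (2 * u₀) + χ x)
          * (∑ i, ∑ j, gIJ u i j x * pd i (pd j χ) x) := by
    simp only [Finset.mul_sum]
    rw [← Finset.sum_add_distrib, ← Finset.sum_add_distrib]
    refine Finset.sum_congr rfl fun i _ => ?_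
    rw [← Finset.sum_add_distrib, ← Finset.sum_add_distrib]
    refine Finset.sum_congr rfl fun j _ => ?_
    rw [hη2 i j]; ring
  rw [hsum, hmse x hx, mul_zero, add_zero]
  apply add_le_add_left
  rw [mul_div_assoc]
  apply mul_le_mul_of_nonneg_left _ (hf'' _)
  -- the quadratic form
  have hS : (0:ℝ) ≤ ∑ i, (pd i u x) ^ 2 := Finset.sum_nonneg fun i _ => sq_nonneg _
  have h1S : (0:ℝ) < 1 + ∑ i, (pd i u x) ^ 2 := by linarith
  have hvv : vGrad u x * vGrad u x = 1 + ∑ i, (pd i u x) ^ 2 :=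
    Real.mul_self_sqrt (by linarith)
  have hgij : ∀ i j : Fin n, gIJ u i j x
      = (if i = j then 1 else 0) - pd i u x * pd j u x / (1 + ∑ k, (pd k u x) ^ 2) := by
    intro i j
    unfold gIJ nuVec
    rw [div_mul_div_comm, hvv]
  have hquad : ∑ i, ∑ j, gIJ u i j x
        * ((pd i u x / (2 * u₀) + pd i χ x) * (pd j u x / (2 * u₀) + pd j χ x))
      = (∑ i, (pd i u x / (2 * u₀) + pd i χ x) ^ 2)
        - (∑ i, pd i u x * (pd i u x / (2 * u₀) + pd i χ x)) ^ 2
            / (1 + ∑ i, (pd i u x) ^ 2) := by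
    have inner : ∀ i : Fin n, ∑ j, gIJ u i j x
          * ((pd i u x / (2 * u₀) + pd i χ x) * (pd j u x / (2 * u₀) + pd j χ x))
        = (pd i u x / (2 * u₀) + pd i χ x) ^ 2
          - (pd i u x * (pd i u x / (2 * u₀) + pd i χ x))
              * (∑ j, pd j u x * (pd j u x / (2 * u₀) + pd j χ x))
              / (1 + ∑ k, (pd k u x) ^ 2) := by
      intro i
      have h1 : ∀ j : Fin n, gIJ u i j x
            * ((pd i u x / (2 * u₀) + pd i χ x) * (pd j u x / (2 * u₀) + pd j χ x))
          = (if i = j then (pd i u x / (2 * u₀) + pd i χ x)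
                * (pd j u x / (2 * u₀) + pd j χ x) else 0)
            - (pd i u x * (pd i u x / (2 * u₀) + pd i χ x))
                * (pd j u x * (pd j u x / (2 * u₀) + pd j χ x))
                / (1 + ∑ k, (pd k u x) ^ 2) := by
        intro j
        rw [hgij i j]
        split_ifs with h
        · subst h; ring
        · ring
      rw [Finset.sum_congr rfl fun j _ => h1 j, Finset.sum_sub_distrib]
      rw [Finset.sum_ite_eq Finset.univ i
        (fun j => (pd i u x / (2 * u₀) + pd i χ x) * (pd j u x / (2 * u₀) + pd j χ x))]
      simp only [Finset.mem_univ, if_true]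
      rw [← Finset.sum_div, ← Finset.mul_sum]
      ring
    rw [Finset.sum_congr rfl fun i _ => inner i, Finset.sum_sub_distrib]
    rw [← Finset.sum_div, ← Finset.sum_mul]
    ring
  rw [hquad]
  -- sum identities
  have eP2 : ∑ i, (pd i u x / (2 * u₀) + pd i χ x) ^ 2
      = (∑ i, (pd i u x) ^ 2) / (4 * u₀ ^ 2)
        + (∑ i, pd i u x * pd i χ x) / u₀ + ∑ i, (pd i χ x) ^ 2 := by
    rw [Finset.sum_congr rfl fun i _ => show (pd i u x / (2 * u₀) + pd i χ x) ^ 2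
        = (pd i u x) ^ 2 / (4 * u₀ ^ 2) + (pd i u x * pd i χ x) / u₀ + (pd i χ x) ^ 2 by
      field_simp; ring]
    rw [Finset.sum_add_distrib, Finset.sum_add_distrib, ← Finset.sum_div, ← Finset.sum_div]
  have eAP : ∑ i, pd i u x * (pd i u x / (2 * u₀) + pd i χ x)
      = (∑ i, (pd i u x) ^ 2) / (2 * u₀) + ∑ i, pd i u x * pd i χ x := by
    rw [Finset.sum_congr rfl fun i _ => show pd i u x * (pd i u x / (2 * u₀) + pd i χ x)
        = (pd i u x) ^ 2 / (2 * u₀) + pd i u x * pd i χ x by field_simp]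
    rw [Finset.sum_add_distrib, ← Finset.sum_div]
  rw [eP2, eAP]
  -- final scalar inequality
  set S := ∑ i, (pd i u x) ^ 2 with hSdef
  set T := ∑ i, pd i u x * pd i χ x with hTdef
  set W := ∑ i, (pd i χ x) ^ 2 with hWdef
  have hW : (0:ℝ) ≤ W := Finset.sum_nonneg fun i _ => sq_nonneg _
  have hCS : T ^ 2 ≤ S * W := by
    have := Finset.sum_mul_sq_le_sq_mul_sq Finset.univ (fun i => pd i u x) (fun i => pd i χ x)
    simpa [hSdef, hTdef, hWdef] using this
  rw [← sub_nonneg]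
  have hid : S / (4 * u₀ ^ 2) + T / u₀ + W - (S / (2 * u₀) + T) ^ 2 / (1 + S)
      - (S + 4 * u₀ * T) / (4 * u₀ ^ 2 * (1 + S))
      = (W * (1 + S) - T ^ 2) / (1 + S) := by
    field_simp
    ring
  rw [hid]
  apply div_nonneg _ (le_of_lt h1S)
  nlinarith [hCS, hW, hS]
end
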